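/- Let $f \ge 0$ with $(1+|v|^2)f \in L^1(\mathbb{R}^N)$ and moments $n, u, T$ defined as usual, with $n > 0$. Let $q > N + 2$ and $N_q(f) := \sup_v |v|^q f(v) < \infty$. Then there is a constant $C_q$ such that $n (T + |u|^2)^{(q-N)/2} \le C_q N_q(f)$. -/

import Mathlib

open MeasureTheory Real Set Pointwise

variable {N : ℕ}

lemma aux_tail_integrable (q : ℝ) (hq : (N : ℝ) + 2 < q) :
    IntegrableOn (fun w : EuclideanSpace ℝ (Fin N) => ‖w‖ ^ (2 - q))
      {w : EuclideanSpace ℝ (Fin N) | 1 ≤ ‖w‖} := by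
  have hd : (Module.finrank ℝ (EuclideanSpace ℝ (Fin N)) : ℝ) < q - 2 := by
    rw [finrank_euclideanSpace_fin]; linarith
  have base : Integrable
      (fun x : EuclideanSpace ℝ (Fin N) => (2:ℝ) ^ (q-2) * (1 + ‖x‖) ^ (-(q-2))) volume :=
    (integrable_one_add_norm hd).const_mul _
  refine Integrable.mono' base.integrableOn ?_ ?_
  · exact (Measurable.aestronglyMeasurable (measurable_norm.pow measurable_const)).restrict
  · refine (ae_restrict_iff' (measurableSet_le measurable_const measurable_norm)).2
      (ae_of_all _ fun x hx => ?_)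
    have ha : (1:ℝ) ≤ ‖x‖ := hx
    have ha0 : (0:ℝ) < ‖x‖ := lt_of_lt_of_le one_pos ha
    rw [Real.norm_eq_abs, abs_of_nonneg (rpow_nonneg (norm_nonneg x) _)]
    calc ‖x‖ ^ (2-q) ≤ ((1 + ‖x‖)/2) ^ (2-q) :=
          Real.rpow_le_rpow_of_nonpos (by linarith) (by linarith) (by linarith)
      _ = (2:ℝ) ^ (q-2) * (1 + ‖x‖) ^ (-(q-2)) := by
          rw [div_rpow (by linarith) (by norm_num),
            show (2:ℝ) - q = -(q-2) by ring,
            Real.rpow_neg (by norm_num : (0:ℝ) ≤ 2), div_eq_mul_inv, inv_inv, mul_comm]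

variable {N : ℕ}

lemma aux_tail_eq (q : ℝ) {R : ℝ} (hR : 0 < R) :
    ∫ w in {w : EuclideanSpace ℝ (Fin N) | R ≤ ‖w‖}, ‖w‖ ^ (2 - q) =
      R ^ ((N : ℝ) + 2 - q) * ∫ w in {w : EuclideanSpace ℝ (Fin N) | 1 ≤ ‖w‖}, ‖w‖ ^ (2 - q) := by
  have hset : R • {w : EuclideanSpace ℝ (Fin N) | 1 ≤ ‖w‖}
      = {w : EuclideanSpace ℝ (Fin N) | R ≤ ‖w‖} := by
    ext w
    rw [Set.mem_smul_set_iff_inv_smul_mem₀ hR.ne']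
    simp only [Set.mem_setOf_eq, norm_smul, norm_inv, Real.norm_eq_abs, abs_of_pos hR]
    rw [inv_mul_eq_div, le_div_iff₀ hR, one_mul]
  have h := MeasureTheory.Measure.setIntegral_comp_smul (volume)
    (fun w : EuclideanSpace ℝ (Fin N) => ‖w‖ ^ (2 - q))
    {w : EuclideanSpace ℝ (Fin N) | 1 ≤ ‖w‖} hR.ne'
  rw [hset] at h
  have hLHS : ∀ x : EuclideanSpace ℝ (Fin N),
      ‖R • x‖ ^ (2 - q) = R ^ (2 - q) * ‖x‖ ^ (2 - q) := fun x => by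
    rw [norm_smul, Real.norm_eq_abs, abs_of_pos hR, Real.mul_rpow hR.le (norm_nonneg x)]
  simp only [hLHS] at h
  rw [integral_const_mul, finrank_euclideanSpace_fin, smul_eq_mul,
    abs_of_pos (by positivity : (0:ℝ) < ((R ^ N)⁻¹))] at h
  have hRN : (0:ℝ) < R ^ N := by positivity
  rw [show (N : ℝ) + 2 - q = (N : ℝ) + (2 - q) by ring, Real.rpow_add hR,
    Real.rpow_natCast]
  field_simp at h ⊢
  linarith

set_option maxHeartbeats 1600000 in
/-- Estimate (ii.1): `n (T + |u|²)^{(q-N)/2} ≤ C_q N_q(f)` for `q > N + 2`. -/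
theorem stmt_3 (N : ℕ) (hN : 1 ≤ N) (m : ℝ) (hm : 0 < m) (q : ℝ) (hq : (N : ℝ) + 2 < q) :
    ∃ C : ℝ, ∀ (f : EuclideanSpace ℝ (Fin N) → ℝ) (n T Nq : ℝ)
      (u : EuclideanSpace ℝ (Fin N)),
      (∀ v, 0 ≤ f v) →
      Integrable (fun v => (1 + ‖v‖ ^ 2) * f v) →
      n = ∫ v, f v →
      0 < n →
      u = n⁻¹ • ∫ v, f v • v →
      T = m / (N * n) * ∫ v, ‖v - u‖ ^ 2 * f v →
      BddAbove (Set.range fun v => ‖v‖ ^ q * f v) →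
      Nq = ⨆ v, ‖v‖ ^ q * f v →
      n * (T + ‖u‖ ^ 2) ^ ((q - N) / 2) ≤ C * Nq := by
  classical
  have hNpos : (0:ℝ) < N := by exact_mod_cast hN
  set c₀ : ℝ := ∫ w in {w : EuclideanSpace ℝ (Fin N) | 1 ≤ ‖w‖}, ‖w‖ ^ (2 - q) with hc₀def
  have hc₀ : 0 ≤ c₀ := setIntegral_nonneg (measurableSet_le measurable_const measurable_norm)
    (fun w _ => Real.rpow_nonneg (norm_nonneg w) _)
  set M : ℝ := max (m / N) 1 with hMdef
  have hM1 : (1:ℝ) ≤ M := le_max_right _ _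
  have hMm : m / N ≤ M := le_max_left _ _
  have hMpos : (0:ℝ) < M := lt_of_lt_of_le one_pos hM1
  set B : ℝ := M * (1 + c₀) with hBdef
  have hBpos : 0 < B := mul_pos hMpos (by linarith)
  refine ⟨B ^ ((q - N) / 2), ?_⟩
  intro f n T Nq u hf hint hn hnpos hu hT hbdd hNq
  -- measurability of f
  have hfm : AEStronglyMeasurable f volume := by
    have hcont : Continuous fun v : EuclideanSpace ℝ (Fin N) => (1 + ‖v‖ ^ 2)⁻¹ :=
      (continuous_const.add (continuous_norm.pow 2)).inv₀ (fun v => (by positivity : (1:ℝ) + ‖v‖ ^ 2 ≠ 0))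
    have heq : (fun v => (1 + ‖v‖ ^ 2)⁻¹ * ((1 + ‖v‖ ^ 2) * f v)) = f := by
      funext v
      have h0 : (1 + ‖v‖ ^ 2) ≠ 0 := by positivity
      field_simp
    rw [← heq]
    exact hcont.aestronglyMeasurable.mul hint.1
  -- integrabilities
  have hone : ∀ v : EuclideanSpace ℝ (Fin N), ‖v‖ ≤ 1 + ‖v‖ ^ 2 := fun v => by
    nlinarith [norm_nonneg v, sq_nonneg (‖v‖ - 1)]
  have hf_int : Integrable f volume := hint.mono' hfm (ae_of_all _ fun v => by
    rw [Real.norm_eq_abs, abs_of_nonneg (hf v)]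
    nlinarith [hf v, sq_nonneg ‖v‖])
  have h2_int : Integrable (fun v : EuclideanSpace ℝ (Fin N) => ‖v‖ ^ 2 * f v) volume :=
    hint.mono' ((continuous_norm.pow 2).aestronglyMeasurable.mul hfm) (ae_of_all _ fun v => by
      rw [Real.norm_eq_abs, abs_of_nonneg (mul_nonneg (sq_nonneg _) (hf v))]
      nlinarith [hf v, sq_nonneg ‖v‖])
  have hvf_int : Integrable (fun v : EuclideanSpace ℝ (Fin N) => f v • v) volume :=
    hint.mono' (hfm.smul aestronglyMeasurable_id) (ae_of_all _ fun v => by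
      rw [norm_smul, Real.norm_eq_abs, abs_of_nonneg (hf v)]
      nlinarith [hf v, hone v, norm_nonneg v])
  -- moment identity
  have hnu : ∫ v, f v • v = n • u := by
    rw [hu, smul_inv_smul₀ hnpos.ne']
  have hinner_int : Integrable
      (fun v : EuclideanSpace ℝ (Fin N) => (inner ℝ u (f v • v) : ℝ)) volume :=
    hvf_int.const_inner u
  have hIu : ∫ v, (inner ℝ u (f v • v) : ℝ) = n * ‖u‖ ^ 2 := by
    rw [integral_inner hvf_int, hnu, real_inner_smul_right, real_inner_self_eq_norm_sq]
  have hkey : ∫ v, ‖v - u‖ ^ 2 * f v = (∫ v, ‖v‖ ^ 2 * f v) - n * ‖u‖ ^ 2 := by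
    have hexp : (fun v : EuclideanSpace ℝ (Fin N) => ‖v - u‖ ^ 2 * f v)
        = fun v => (‖v‖ ^ 2 * f v - 2 * (inner ℝ u (f v • v) : ℝ)) + ‖u‖ ^ 2 * f v := by
      funext v
      rw [norm_sub_sq_real, real_inner_smul_right, real_inner_comm]
      ring
    have hs1 : Integrable
        (fun v : EuclideanSpace ℝ (Fin N) => ‖v‖ ^ 2 * f v - 2 * (inner ℝ u (f v • v) : ℝ))
        volume := h2_int.sub (hinner_int.const_mul 2)
    have hs2 : Integrable (fun v : EuclideanSpace ℝ (Fin N) => ‖u‖ ^ 2 * f v) volume :=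
      hf_int.const_mul (‖u‖ ^ 2)
    rw [hexp, integral_add hs1 hs2,
      integral_sub h2_int (hinner_int.const_mul 2), integral_const_mul, integral_const_mul, hIu, ← hn]
    ring
  -- Nq facts
  have hfle : ∀ v, ‖v‖ ^ q * f v ≤ Nq := fun v => by
    rw [hNq]; exact le_ciSup hbdd v
  have hq0 : q ≠ 0 := ne_of_gt (by linarith : (0:ℝ) < q)
  have hNq0 : 0 ≤ Nq := by
    have h0 : ‖(0 : EuclideanSpace ℝ (Fin N))‖ ^ q * f 0 = 0 := by
      rw [norm_zero, Real.zero_rpow hq0, zero_mul]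
    rw [hNq]
    calc (0:ℝ) = ‖(0 : EuclideanSpace ℝ (Fin N))‖ ^ q * f 0 := h0.symm
      _ ≤ _ := le_ciSup hbdd 0
  have hNqpos : 0 < Nq := by
    rcases lt_or_eq_of_le hNq0 with h | h
    · exact h
    exfalso
    have hzero : ∀ v : EuclideanSpace ℝ (Fin N), v ≠ 0 → f v = 0 := by
      intro v hv
      have h1 := hfle v
      have h2 : 0 < ‖v‖ ^ q := Real.rpow_pos_of_pos (norm_pos_iff.2 hv) q
      nlinarith [hf v]
    haveI : Nonempty (Fin N) := ⟨⟨0, hN⟩⟩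
    have hae : f =ᵐ[volume] 0 := by
      have hsub : {v : EuclideanSpace ℝ (Fin N) | f v ≠ 0} ⊆ {0} := by
        intro v hv
        by_contra hv0
        exact hv (hzero v (by simpa using hv0))
      have hnull : volume {v : EuclideanSpace ℝ (Fin N) | f v ≠ 0} = 0 :=
        measure_mono_null hsub (measure_singleton 0)
      rw [Filter.EventuallyEq, ae_iff]
      simpa using hnull
    have hzero' : n = 0 := by rw [hn, integral_congr_ae hae]; simp
    linarith
  -- splitting estimate
  have hsplit : ∀ R : ℝ, 0 < R →
      ∫ v, ‖v‖ ^ 2 * f v ≤ R ^ 2 * n + Nq * (R ^ ((N:ℝ) + 2 - q) * c₀) := by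
    intro R hR
    set s : Set (EuclideanSpace ℝ (Fin N)) := {v | R ≤ ‖v‖} with hs
    have hsm : MeasurableSet s := measurableSet_le measurable_const measurable_norm
    have htail_int : IntegrableOn (fun w : EuclideanSpace ℝ (Fin N) => ‖w‖ ^ (2 - q)) s volume := by
      have h1 := aux_tail_integrable (N := N) q hq
      have h2 : IntegrableOn (fun w : EuclideanSpace ℝ (Fin N) => ‖w‖ ^ (2 - q))
          (s ∩ Metric.closedBall 0 1) volume := by
        refine Measure.integrableOn_of_bounded (M := R ^ (2 - q)) ?_
          (Measurable.aestronglyMeasurable (measurable_norm.pow measurable_const)) ?_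
        · exact ne_of_lt (lt_of_le_of_lt (measure_mono Set.inter_subset_right)
            measure_closedBall_lt_top)
        · refine (ae_restrict_iff' (hsm.inter measurableSet_closedBall)).2
            (ae_of_all _ fun w hw => ?_)
          rw [Real.norm_eq_abs, abs_of_nonneg (Real.rpow_nonneg (norm_nonneg _) _)]
          exact Real.rpow_le_rpow_of_nonpos hR hw.1 (by linarith)
      have hcover : s ⊆ (s ∩ Metric.closedBall 0 1) ∪ {w | 1 ≤ ‖w‖} := by
        intro w hw
        rcases le_or_gt 1 ‖w‖ with hcase | hcase
        · exact Or.inr hcase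
        · exact Or.inl ⟨hw, by simpa [Metric.mem_closedBall, dist_zero_right] using hcase.le⟩
      exact (h2.union h1).mono_set hcover
    have hdecomp := integral_add_compl hsm h2_int
      (f := fun v : EuclideanSpace ℝ (Fin N) => ‖v‖ ^ 2 * f v)
    have hb1 : ∫ v in sᶜ, ‖v‖ ^ 2 * f v ≤ R ^ 2 * n := by
      have hle : ∫ v in sᶜ, ‖v‖ ^ 2 * f v ≤ ∫ v in sᶜ, R ^ 2 * f v := by
        refine setIntegral_mono_on h2_int.integrableOn
          ((hf_int.const_mul _).integrableOn) hsm.compl fun v hv => ?_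
        have hv' : ‖v‖ < R := by
          have : ¬ R ≤ ‖v‖ := hv
          linarith [not_le.1 this]
        nlinarith [mul_nonneg (mul_nonneg (sub_nonneg.2 hv'.le)
          (by linarith [norm_nonneg v] : (0:ℝ) ≤ R + ‖v‖)) (hf v)]
      calc ∫ v in sᶜ, ‖v‖ ^ 2 * f v ≤ ∫ v in sᶜ, R ^ 2 * f v := hle
        _ = R ^ 2 * ∫ v in sᶜ, f v := integral_const_mul _ _
        _ ≤ R ^ 2 * ∫ v, f v := mul_le_mul_of_nonneg_left
            (setIntegral_le_integral hf_int (ae_of_all _ hf)) (sq_nonneg R)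
        _ = R ^ 2 * n := by rw [hn]
    have hb2 : ∫ v in s, ‖v‖ ^ 2 * f v ≤ Nq * (R ^ ((N:ℝ) + 2 - q) * c₀) := by
      have hle : ∫ v in s, ‖v‖ ^ 2 * f v ≤ ∫ v in s, Nq * ‖v‖ ^ (2 - q) := by
        refine setIntegral_mono_on h2_int.integrableOn (htail_int.const_mul Nq) hsm
          fun v hv => ?_
        have hvpos : 0 < ‖v‖ := lt_of_lt_of_le hR hv
        have hid : ‖v‖ ^ (2 - q) * ‖v‖ ^ q = ‖v‖ ^ 2 := by
          rw [← Real.rpow_add hvpos, sub_add_cancel, Real.rpow_two]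
        calc ‖v‖ ^ 2 * f v = ‖v‖ ^ (2 - q) * (‖v‖ ^ q * f v) := by
              rw [← mul_assoc, hid]
          _ ≤ ‖v‖ ^ (2 - q) * Nq := mul_le_mul_of_nonneg_left (hfle v)
              (Real.rpow_nonneg (norm_nonneg v) _)
          _ = Nq * ‖v‖ ^ (2 - q) := mul_comm _ _
      calc ∫ v in s, ‖v‖ ^ 2 * f v ≤ ∫ v in s, Nq * ‖v‖ ^ (2 - q) := hle
        _ = Nq * ∫ v in s, ‖v‖ ^ (2 - q) := integral_const_mul _ _
        _ = Nq * (R ^ ((N:ℝ) + 2 - q) * c₀) := by rw [aux_tail_eq q hR]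
    calc ∫ v, ‖v‖ ^ 2 * f v = (∫ v in s, ‖v‖ ^ 2 * f v) + ∫ v in sᶜ, ‖v‖ ^ 2 * f v :=
          hdecomp.symm
      _ ≤ Nq * (R ^ ((N:ℝ) + 2 - q) * c₀) + R ^ 2 * n := add_le_add hb2 hb1
      _ = R ^ 2 * n + Nq * (R ^ ((N:ℝ) + 2 - q) * c₀) := by ring
  -- optimization
  set p : ℝ := q - N with hp
  have hp2 : 2 < p := by rw [hp]; linarith
  have hppos : 0 < p := by linarith
  set x : ℝ := Nq / n with hx
  have hxpos : 0 < x := div_pos hNqpos hnpos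
  set R : ℝ := x ^ (1/p) with hRdef
  have hRpos : 0 < R := Real.rpow_pos_of_pos hxpos _
  have hI2 : ∫ v, ‖v‖ ^ 2 * f v ≤ (1 + c₀) * n * x ^ (2/p) := by
    have h := hsplit R hRpos
    have e1 : R ^ 2 = x ^ (2/p) := by
      rw [hRdef, ← Real.rpow_two, ← Real.rpow_mul hxpos.le,
        show 1/p*2 = 2/p by ring]
    have e2 : R ^ ((N:ℝ) + 2 - q) = x ^ ((2 - p)/p) := by
      rw [hRdef, ← Real.rpow_mul hxpos.le]
      congr 1
      rw [show (N:ℝ) + 2 - q = 2 - p by rw [hp]; ring]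
      ring
    have e3 : Nq * x ^ ((2 - p)/p) = n * x ^ (2/p) := by
      have hxe : x ^ ((2 - p)/p) = x ^ (2/p) * x⁻¹ := by
        rw [show (2 - p)/p = 2/p + (-1) by field_simp; ring, Real.rpow_add hxpos,
          Real.rpow_neg_one]
      rw [hxe, hx]
      field_simp
    calc ∫ v, ‖v‖ ^ 2 * f v ≤ R ^ 2 * n + Nq * (R ^ ((N:ℝ) + 2 - q) * c₀) := h
      _ = x ^ (2/p) * n + (Nq * x ^ ((2 - p)/p)) * c₀ := by rw [e1, e2]; ring
      _ = x ^ (2/p) * n + (n * x ^ (2/p)) * c₀ := by rw [e3]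
      _ = (1 + c₀) * n * x ^ (2/p) := by ring
  have hJ : 0 ≤ ∫ v, ‖v - u‖ ^ 2 * f v :=
    integral_nonneg fun v => mul_nonneg (sq_nonneg _) (hf v)
  have hnu2 : (0:ℝ) ≤ n * ‖u‖ ^ 2 := mul_nonneg hnpos.le (sq_nonneg _)
  have hnT : n * T = m / N * ∫ v, ‖v - u‖ ^ 2 * f v := by
    rw [hT]
    field_simp
  have hT0 : 0 ≤ T := by
    rw [hT]
    exact mul_nonneg (div_nonneg hm.le (mul_nonneg hNpos.le hnpos.le)) hJ
  have hE0 : 0 ≤ T + ‖u‖ ^ 2 := add_nonneg hT0 (sq_nonneg _)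
  have hEineq : n * (T + ‖u‖ ^ 2) ≤ M * ∫ v, ‖v‖ ^ 2 * f v := by
    have heq1 : n * (T + ‖u‖ ^ 2) = m / N * (∫ v, ‖v - u‖ ^ 2 * f v) + n * ‖u‖ ^ 2 := by
      rw [mul_add, hnT]
    rw [heq1]
    calc m / N * (∫ v, ‖v - u‖ ^ 2 * f v) + n * ‖u‖ ^ 2
        ≤ M * (∫ v, ‖v - u‖ ^ 2 * f v) + M * (n * ‖u‖ ^ 2) :=
          add_le_add (mul_le_mul_of_nonneg_right hMm hJ) (le_mul_of_one_le_left hnu2 hM1)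
      _ = M * ((∫ v, ‖v - u‖ ^ 2 * f v) + n * ‖u‖ ^ 2) := by ring
      _ = M * ∫ v, ‖v‖ ^ 2 * f v := by rw [hkey]; ring
  have hEB : T + ‖u‖ ^ 2 ≤ B * x ^ (2/p) := by
    have h1 : n * (T + ‖u‖ ^ 2) ≤ M * ((1 + c₀) * n * x ^ (2/p)) :=
      le_trans hEineq (mul_le_mul_of_nonneg_left hI2 hMpos.le)
    have h2 : n * (T + ‖u‖ ^ 2) ≤ n * (B * x ^ (2/p)) := by
      rw [hBdef]
      nlinarith [h1]
    exact (mul_le_mul_iff_right₀ hnpos).1 h2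
  have hfinal : (T + ‖u‖ ^ 2) ^ (p/2) ≤ B ^ (p/2) * x := by
    have h1 : (T + ‖u‖ ^ 2) ^ (p/2) ≤ (B * x ^ (2/p)) ^ (p/2) :=
      Real.rpow_le_rpow hE0 hEB (by positivity)
    have h2 : (B * x ^ (2/p)) ^ (p/2) = B ^ (p/2) * x := by
      rw [Real.mul_rpow hBpos.le (Real.rpow_nonneg hxpos.le _),
        ← Real.rpow_mul hxpos.le, show 2/p * (p/2) = 1 by field_simp, Real.rpow_one]
    linarith [h1, h2.le, h2.ge]
  have hgoal : n * (T + ‖u‖ ^ 2) ^ (p/2) ≤ B ^ (p/2) * Nq := by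
    calc n * (T + ‖u‖ ^ 2) ^ (p/2) ≤ n * (B ^ (p/2) * x) :=
          mul_le_mul_of_nonneg_left hfinal hnpos.le
      _ = B ^ (p/2) * Nq := by rw [hx]; field_simp
  convert hgoal using 3
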